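/- The zero-error non-signalling LP value equals the fractional packing number: M♭(0,E) = α*(H(E)) = ω*(H(E)), where M♭(0,E) is the optimal value of the LP max ∑_x v(x) subject to 0 ≤ F(x,y) ≤ v(x), ∑_x F(x,y) ≤ 1 for all y, and ∑_{x,y} E(y|x)F(x,y) ≥ ∑_x v(x). -/

import Mathlib

open Finset

private lemma aux_le (a b : ℝ) (h : ∀ ε : ℝ, 0 < ε → ε * a < b) : a ≤ 0 := by
  by_contra ha
  push_neg at ha
  have hpos : (0:ℝ) < (|b| + 1) / a := div_pos (by positivity) ha
  have h1 := h _ hpos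
  rw [div_mul_cancel₀ _ (ne_of_gt ha)] at h1
  have : b ≤ |b| := le_abs_self b
  linarith

private lemma aux_nonneg (a C : ℝ) (h : ∀ t : ℝ, 0 < t → t * a < C) : 0 ≤ C := by
  rcases le_or_gt 0 a with h1 | h1
  · have := h 1 one_pos; nlinarith
  · by_contra hC
    push_neg at hC
    have ht : (0:ℝ) < C / (2 * a) := div_pos_of_neg_of_neg hC (by linarith)
    have h3 := h _ ht
    have h4 : C / (2 * a) * a = C / 2 := by
      rw [div_mul_eq_mul_div, mul_comm C a, mul_comm (2:ℝ) a, ← div_div,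
        mul_div_cancel_left₀ _ (by linarith : a ≠ 0)]
    rw [h4] at h3
    linarith

private lemma aux_comb {a b s t s' t' : ℝ} (ha : 0 ≤ a) (hb : 0 ≤ b) (hab : a + b = 1)
    (h1 : s < t) (h2 : s' < t') : a * s + b * s' < a * t + b * t' := by
  rcases ha.eq_or_lt with rfl | ha'
  · have hb1 : b = 1 := by linarith
    subst hb1; simpa using h2
  · have k1 := mul_lt_mul_of_pos_left h1 ha'
    have k2 := mul_le_mul_of_nonneg_left h2.le hb
    linarith

/-- The zero-error non-signalling LP value equals the
fractional packing number, which equals the fractional covering number: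
`M♭(0,E) = α*(H(E)) = ω*(H(E))`. -/
theorem stmt13 {A B : Type*} [Fintype A] [Fintype B]
    (E : A → B → ℝ) (hEpos : ∀ x y, 0 ≤ E x y) (hEsum : ∀ x, ∑ y, E x y = 1) :
    sSup {s : ℝ | ∃ (F : A → B → ℝ) (v : A → ℝ),
        (∀ x y, 0 ≤ F x y) ∧ (∀ x, 0 ≤ v x) ∧
        (∀ x y, F x y ≤ v x) ∧ (∀ y, ∑ x, F x y ≤ 1) ∧
        (∑ x, v x ≤ ∑ x, ∑ y, E x y * F x y) ∧
        s = ∑ x, v x}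
      = sSup {s : ℝ | ∃ v : A → ℝ, (∀ x, 0 ≤ v x) ∧
          (∀ y, ∑ x, (if 0 < E x y then v x else 0) ≤ 1) ∧
          s = ∑ x, v x}
    ∧ sSup {s : ℝ | ∃ v : A → ℝ, (∀ x, 0 ≤ v x) ∧
          (∀ y, ∑ x, (if 0 < E x y then v x else 0) ≤ 1) ∧
          s = ∑ x, v x}
      = sInf {s : ℝ | ∃ c : B → ℝ, (∀ y, 0 ≤ c y) ∧
          (∀ x, 1 ≤ ∑ y, (if 0 < E x y then c y else 0)) ∧
          s = ∑ y, c y} := by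
  classical
  set P : Set ℝ := {s : ℝ | ∃ v : A → ℝ, (∀ x, 0 ≤ v x) ∧
          (∀ y, ∑ x, (if 0 < E x y then v x else 0) ≤ 1) ∧
          s = ∑ x, v x} with hPdef
  set C : Set ℝ := {s : ℝ | ∃ c : B → ℝ, (∀ y, 0 ≤ c y) ∧
          (∀ x, 1 ≤ ∑ y, (if 0 < E x y then c y else 0)) ∧
          s = ∑ y, c y} with hCdef
  set L : Set ℝ := {s : ℝ | ∃ (F : A → B → ℝ) (v : A → ℝ),
        (∀ x y, 0 ≤ F x y) ∧ (∀ x, 0 ≤ v x) ∧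
        (∀ x y, F x y ≤ v x) ∧ (∀ y, ∑ x, F x y ≤ 1) ∧
        (∑ x, v x ≤ ∑ x, ∑ y, E x y * F x y) ∧
        s = ∑ x, v x} with hLdef
  -- every row has a positive entry
  have hcover1 : ∀ x : A, ∃ y, 0 < E x y := by
    intro x
    by_contra h
    push_neg at h
    have h0 : ∑ y, E x y = 0 :=
      Finset.sum_eq_zero fun y _ => le_antisymm (h y) (hEpos x y)
    rw [hEsum x] at h0
    norm_num at h0
  -- Part 1 : L = P
  have hLP : L = P := by
    ext s
    constructor
    · rintro ⟨F, v, hF0, hv0, hFv, hcol, hkey, rfl⟩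
      refine ⟨v, hv0, fun y => ?_, rfl⟩
      have h1 : ∀ x, ∑ y, E x y * F x y ≤ v x := by
        intro x
        calc ∑ y, E x y * F x y ≤ ∑ y, E x y * v x :=
              Finset.sum_le_sum fun y _ => mul_le_mul_of_nonneg_left (hFv x y) (hEpos x y)
          _ = v x := by rw [← Finset.sum_mul, hEsum, one_mul]
      have h2 : ∑ x, ∑ y, E x y * F x y = ∑ x, v x :=
        le_antisymm (Finset.sum_le_sum fun x _ => h1 x) hkey
      have h3 : ∀ x, ∑ y, E x y * F x y = v x := fun x =>
        (Finset.sum_eq_sum_iff_of_le (fun x _ => h1 x)).mp h2 x (Finset.mem_univ x)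
      have h4 : ∀ x y, E x y * F x y = E x y * v x := by
        intro x
        have hle : ∀ y ∈ Finset.univ, E x y * F x y ≤ E x y * v x :=
          fun y _ => mul_le_mul_of_nonneg_left (hFv x y) (hEpos x y)
        have hseq : ∑ y, E x y * F x y = ∑ y, E x y * v x := by
          rw [h3 x, ← Finset.sum_mul, hEsum, one_mul]
        exact fun y => (Finset.sum_eq_sum_iff_of_le hle).mp hseq y (Finset.mem_univ y)
      have h5 : ∀ x, 0 < E x y → F x y = v x := fun x hx =>
        mul_left_cancel₀ (ne_of_gt hx) (h4 x y)
      calc ∑ x, (if 0 < E x y then v x else 0)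
            = ∑ x, (if 0 < E x y then F x y else 0) := by
            refine Finset.sum_congr rfl fun x _ => ?_
            by_cases h : 0 < E x y
            · rw [if_pos h, if_pos h, h5 x h]
            · rw [if_neg h, if_neg h]
        _ ≤ ∑ x, F x y := Finset.sum_le_sum fun x _ => by
            by_cases h : 0 < E x y
            · rw [if_pos h]
            · rw [if_neg h]; exact hF0 x y
        _ ≤ 1 := hcol y
    · rintro ⟨v, hv0, hv1, rfl⟩
      refine ⟨fun x y => if 0 < E x y then v x else 0, v, ?_, hv0, ?_, hv1, ?_, rfl⟩
      · intro x y; by_cases h : 0 < E x y <;> simp [h, hv0 x]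
      · intro x y; by_cases h : 0 < E x y <;> simp [h, hv0 x]
      · have heq : ∀ x y, E x y * (if 0 < E x y then v x else 0) = E x y * v x := by
          intro x y
          by_cases h : 0 < E x y
          · rw [if_pos h]
          · have h0 : E x y = 0 := le_antisymm (not_lt.mp h) (hEpos x y)
            rw [h0, zero_mul, zero_mul]
        refine le_of_eq ?_
        simp_rw [heq]
        refine Finset.sum_congr rfl fun x _ => ?_
        rw [← Finset.sum_mul, hEsum, one_mul]
  -- weak duality
  have hweak : ∀ s ∈ P, ∀ t ∈ C, s ≤ t := by
    rintro s ⟨v, hv0, hv1, rfl⟩ t ⟨c, hc0, hc1, rfl⟩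
    calc ∑ x, v x ≤ ∑ x, v x * ∑ y, (if 0 < E x y then c y else 0) :=
          Finset.sum_le_sum fun x _ => le_mul_of_one_le_right (hv0 x) (hc1 x)
      _ = ∑ y, (∑ x, (if 0 < E x y then v x else 0)) * c y := by
          simp_rw [Finset.mul_sum, mul_ite, mul_zero]
          rw [Finset.sum_comm]
          refine Finset.sum_congr rfl fun y _ => ?_
          rw [Finset.sum_mul]
          refine Finset.sum_congr rfl fun x _ => ?_
          split <;> simp
      _ ≤ ∑ y, c y :=
          Finset.sum_le_sum fun y _ => mul_le_of_le_one_left (hc0 y) (hv1 y)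
  have hP0 : (0:ℝ) ∈ P := ⟨fun _ => 0, fun _ => le_refl 0, by simp, by simp⟩
  have hCone : (∑ _y : B, (1:ℝ)) ∈ C := by
    refine ⟨fun _ => 1, fun _ => zero_le_one, fun x => ?_, rfl⟩
    obtain ⟨y₀, hy₀⟩ := hcover1 x
    have h1 : ((if 0 < E x y₀ then (1:ℝ) else 0)) ≤ ∑ y, (if 0 < E x y then (1:ℝ) else 0) :=
      Finset.single_le_sum (f := fun y => if 0 < E x y then (1:ℝ) else 0)
        (fun y _ => by by_cases h : 0 < E x y <;> simp [h]) (Finset.mem_univ y₀)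
    rwa [if_pos hy₀] at h1
  have hPne : P.Nonempty := ⟨0, hP0⟩
  have hPbdd : BddAbove P := ⟨∑ _y : B, (1:ℝ), fun s hs => hweak s hs _ hCone⟩
  set p := sSup P with hp
  have hple : ∀ s ∈ P, s ≤ p := fun s hs => le_csSup hPbdd hs
  -- strong duality : exists dual solution with value ≤ p
  have hdual : ∃ t ∈ C, t ≤ p := by
    set S : Set ((B → ℝ) × ℝ) :=
      {w | ∃ v : A → ℝ, (∀ x, 0 ≤ v x) ∧
        (∀ y, (∑ x, if 0 < E x y then v x else 0) < w.1 y) ∧ w.2 < ∑ x, v x} with hSdef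
    have hSopen : IsOpen S := by
      have hrw : S = ⋃ v ∈ {v : A → ℝ | ∀ x, 0 ≤ v x},
          ((⋂ y, {w : (B → ℝ) × ℝ | (∑ x, if 0 < E x y then v x else 0) < w.1 y}) ∩
           {w : (B → ℝ) × ℝ | w.2 < ∑ x, v x}) := by
        ext w
        simp only [hSdef, Set.mem_setOf_eq, Set.mem_iUnion, Set.mem_inter_iff, Set.mem_iInter]
        tauto
      rw [hrw]
      refine isOpen_biUnion fun v _ => IsOpen.inter ?_ ?_
      · exact isOpen_iInter_of_finite fun y =>
          isOpen_lt continuous_const ((continuous_apply y).comp continuous_fst)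
      · exact isOpen_lt continuous_snd continuous_const
    have hSconv : Convex ℝ S := by
      rintro w₁ ⟨v₁, hv₁, hb₁, ht₁⟩ w₂ ⟨v₂, hv₂, hb₂, ht₂⟩ a b ha hb hab
      refine ⟨fun x => a * v₁ x + b * v₂ x,
        fun x => by have := hv₁ x; have := hv₂ x; positivity, fun y => ?_, ?_⟩
      · have hsum : (∑ x, if 0 < E x y then a * v₁ x + b * v₂ x else 0)
            = a * (∑ x, if 0 < E x y then v₁ x else 0)
              + b * (∑ x, if 0 < E x y then v₂ x else 0) := by
          rw [Finset.mul_sum, Finset.mul_sum, ← Finset.sum_add_distrib]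
          refine Finset.sum_congr rfl fun x _ => ?_
          by_cases h : 0 < E x y <;> simp [h]
        rw [hsum]
        have hw : (a • w₁ + b • w₂).1 y = a * w₁.1 y + b * w₂.1 y := rfl
        rw [hw]
        exact aux_comb ha hb hab (hb₁ y) (hb₂ y)
      · have hsum : ∑ x, (a * v₁ x + b * v₂ x) = a * (∑ x, v₁ x) + b * (∑ x, v₂ x) := by
          rw [Finset.mul_sum, Finset.mul_sum, Finset.sum_add_distrib]
        have hw : (a • w₁ + b • w₂).2 = a * w₁.2 + b * w₂.2 := rfl
        rw [hw, hsum]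
        exact aux_comb ha hb hab ht₁ ht₂
    have hx0 : ((fun _ => (1:ℝ)), p) ∉ S := by
      rintro ⟨v, hv0, hb, hp'⟩
      have hmem : (∑ x, v x) ∈ P := ⟨v, hv0, fun y => (hb y).le, rfl⟩
      exact absurd (hple _ hmem) (not_le.mpr hp')
    obtain ⟨f, hf⟩ := geometric_hahn_banach_open_point hSconv hSopen hx0
    set c : B → ℝ := fun y => f (Pi.single y 1, 0) with hcdef
    set γ : ℝ := f (0, 1) with hγdef
    have hfeval : ∀ (b : B → ℝ) (t : ℝ), f (b, t) = (∑ y, b y * c y) + t * γ := by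
      intro b t
      have hbt : ((b, t) : (B → ℝ) × ℝ)
          = (∑ y, b y • ((Pi.single y (1:ℝ) : B → ℝ), (0:ℝ))) + t • ((0 : B → ℝ), (1:ℝ)) := by
        refine Prod.ext ?_ ?_
        · simp only [Prod.fst_add, Prod.fst_sum, Prod.smul_fst, smul_eq_mul, Prod.smul_snd,
            smul_zero]
          funext x
          simp [Finset.sum_apply, Pi.single_apply, mul_ite]
        · simp [Prod.snd_sum]
      rw [hbt, map_add, map_sum]
      simp only [map_smul, smul_eq_mul]
      rfl
    -- main inequality from separation
    have hmain : ∀ (v : A → ℝ), (∀ x, 0 ≤ v x) → ∀ (b : B → ℝ),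
        (∀ y, (∑ x, if 0 < E x y then v x else 0) < b y) → ∀ ε : ℝ, 0 < ε →
        (∑ y, b y * c y) + (∑ x, v x - ε) * γ < (∑ y, c y) + p * γ := by
      intro v hv b hb ε hε
      have hw : ((b, ∑ x, v x - ε) : (B → ℝ) × ℝ) ∈ S :=
        ⟨v, hv, hb, show (∑ x, v x) - ε < ∑ x, v x by linarith⟩
      have h1 := hf _ hw
      rw [hfeval, hfeval] at h1
      simpa using h1
    have hγ0 : 0 ≤ γ := by
      have h2 : ∀ ε : ℝ, 0 < ε → ε * (-γ) < p * γ := by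
        intro ε hε
        have h1 := hmain (fun _ => 0) (fun _ => le_rfl) (fun _ => 1) (by simp) ε hε
        simp only [one_mul, Finset.sum_const_zero, zero_sub] at h1
        linarith
      have := aux_le (-γ) (p * γ) h2
      linarith
    have hγpos : 0 < γ := by
      rcases hγ0.lt_or_eq with h | h
      · exact h
      · exfalso
        have h1 := hmain (fun _ => 0) (fun _ => le_rfl) (fun _ => 1) (by simp) 1 one_pos
        rw [← h] at h1
        simp at h1
    have hcnonpos : ∀ y₀, c y₀ ≤ 0 := by
      intro y₀
      refine aux_le (c y₀) (c y₀ + p * γ + γ) (fun s hs => ?_)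
      have hcond : ∀ y, (∑ x : A, if 0 < E x y then (fun _ : A => (0:ℝ)) x else 0)
          < (fun y => if y = y₀ then s else (1:ℝ)) y := by
        intro y; by_cases h : y = y₀ <;> simp [h, hs]
      have h1 := hmain (fun _ => 0) (fun _ => le_rfl) _ hcond 1 one_pos
      have hsp : ∑ y, (if y = y₀ then s else 1) * c y = (s - 1) * c y₀ + ∑ y, c y := by
        have hterm : ∀ y, (if y = y₀ then s else 1) * c y
            = (if y = y₀ then (s - 1) * c y₀ else 0) + c y := by
          intro y; by_cases h : y = y₀
          · subst h; rw [if_pos rfl, if_pos rfl]; ring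
          · rw [if_neg h, if_neg h, one_mul, zero_add]
        simp_rw [hterm]
        rw [Finset.sum_add_distrib,
          Finset.sum_ite_eq' Finset.univ y₀ fun _ => (s - 1) * c y₀]
        simp
      simp only [Finset.sum_const_zero, zero_sub] at h1
      rw [hsp] at h1
      linarith
    have hcov : ∀ x₀ : A, γ ≤ ∑ y, (if 0 < E x₀ y then -c y else 0) := by
      intro x₀
      have key := aux_le (γ + ∑ y, (if 0 < E x₀ y then c y else 0)) (p * γ + γ) ?_
      · have hneg : ∑ y, (if 0 < E x₀ y then -c y else 0)
            = -∑ y, (if 0 < E x₀ y then c y else 0) := by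
          rw [← Finset.sum_neg_distrib]
          refine Finset.sum_congr rfl fun y _ => ?_
          by_cases h : 0 < E x₀ y <;> simp [h]
        rw [hneg]
        linarith
      · intro s hs
        set v : A → ℝ := fun x => if x = x₀ then s else 0 with hvdef
        have hv0 : ∀ x, 0 ≤ v x := fun x => by
          by_cases h : x = x₀ <;> simp [hvdef, h, hs.le]
        have hvsum : ∑ x, v x = s := by
          simp [hvdef, Finset.sum_ite_eq' Finset.univ x₀]
        have hgv : ∀ y, (∑ x, if 0 < E x y then v x else 0)
            = (if 0 < E x₀ y then s else 0) := by
          intro y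
          rw [Finset.sum_eq_single_of_mem x₀ (Finset.mem_univ x₀)
            (fun x _ hx => by simp [hvdef, hx])]
          simp [hvdef]
        set b : B → ℝ := fun y => (if 0 < E x₀ y then s else 0) + 1 with hbdef
        have hcond : ∀ y, (∑ x, if 0 < E x y then v x else 0) < b y := by
          intro y
          rw [hgv y]
          simp only [hbdef]
          exact lt_add_one _
        have h1 := hmain v hv0 b hcond 1 one_pos
        rw [hvsum] at h1
        have hbs : ∑ y, b y * c y
            = s * (∑ y, (if 0 < E x₀ y then c y else 0)) + ∑ y, c y := by
          rw [Finset.mul_sum, ← Finset.sum_add_distrib]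
          refine Finset.sum_congr rfl fun y _ => ?_
          by_cases h : 0 < E x₀ y <;> simp [hbdef, h] <;> ring
        rw [hbs] at h1
        nlinarith [h1]
    have hsumc : -∑ y, c y ≤ p * γ := by
      have key : ∀ t : ℝ, 0 < t → t * ((∑ y, c y) - γ) < (∑ y, c y) + p * γ := by
        intro t ht
        have h1 := hmain (fun _ => 0) (fun _ => le_rfl) (fun _ => t)
          (by intro y; simpa using ht) t ht
        simp only [Finset.sum_const_zero, zero_sub] at h1
        rw [← Finset.mul_sum] at h1
        linarith
      have := aux_nonneg _ _ key
      linarith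
    refine ⟨∑ y, -c y / γ, ⟨fun y => -c y / γ, fun y =>
      div_nonneg (neg_nonneg.mpr (hcnonpos y)) hγpos.le, fun x => ?_, rfl⟩, ?_⟩
    · have h1 : (∑ y, (if 0 < E x y then -c y else 0)) / γ
          = ∑ y, (if 0 < E x y then -c y / γ else 0) := by
        rw [Finset.sum_div]
        refine Finset.sum_congr rfl fun y _ => ?_
        by_cases h : 0 < E x y <;> simp [h]
      rw [← h1]
      rw [le_div_iff₀ hγpos, one_mul]
      exact hcov x
    · rw [← Finset.sum_div]
      rw [div_le_iff₀ hγpos]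
      calc ∑ y, -c y = -∑ y, c y := by rw [Finset.sum_neg_distrib]
        _ ≤ p * γ := hsumc
  have hCbdd : BddBelow C :=
    ⟨0, fun t ht => by
      obtain ⟨c, h0, _, rfl⟩ := ht
      exact Finset.sum_nonneg fun y _ => h0 y⟩
  obtain ⟨t₀, ht₀C, ht₀⟩ := hdual
  have h2 : sSup P = sInf C := by
    refine le_antisymm ?_ ?_
    · exact le_csInf ⟨_, hCone⟩ fun t ht => csSup_le hPne fun s hs => hweak s hs t ht
    · exact le_trans (csInf_le hCbdd ht₀C) ht₀
  exact ⟨by rw [hLP], h2⟩
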